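/- For any nonempty multisegment M in MS_n there exists an index k with 1 ≤ k ≤ n such that e_k(M) ≠ 0. Consequently, the empty multisegment can be reached from any M ∈ MS_n by applying finitely many crystal raising operators e_i, and (MS_n, e_i, f_i) is a highest weight crystal with highest weight element the empty multisegment. -/

import Mathlib

/-- A segment `[a,b]` is a pair of integers. -/
abbrev Seg : Type := ℕ × ℕ

/-- A multisegment is a finite multiset of segments. -/
abbrev MS : Type := Multiset Seg

/-- `M ∈ MS_n`: all segments `[a,b]` satisfy `1 ≤ a ≤ b ≤ n`. -/
def IsMS (n : ℕ) (M : MS) : Prop := ∀ s ∈ M, 1 ≤ s.1 ∧ s.1 ≤ s.2 ∧ s.2 ≤ n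

/-- A bracket: `op` = "(", `cl` = ")". -/
inductive Br | op | cl
deriving DecidableEq

/-- One step of the left-to-right bracket cancellation procedure.  The state
`(cls, ops)` records the tags of the currently uncanceled ")" (in order) and the
currently uncanceled "(" (in order).  A new "(" is appended to `ops`; a new ")"
cancels the last uncanceled "(" if there is one, and otherwise is appended to `cls`. -/
def step {τ : Type} : (List τ × List τ) → (Br × τ) → (List τ × List τ)
  | (cls, ops), (Br.op, s) => (cls, ops ++ [s])
  | (cls, ops), (Br.cl, s) => if ops.isEmpty then (cls ++ [s], ops) else (cls, ops.dropLast)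

/-- Process a tagged bracket string; the result `(cls, ops)` lists the tags of the
uncanceled ")" and the uncanceled "(" (left to right).  The reduced (uncanceled)
string is `")"^cls.length ++ "("^ops.length`. -/
def scan {τ : Type} (l : List (Br × τ)) : List τ × List τ := l.foldl step ([], [])

/-- Number of uncanceled ")" in a tagged bracket string. -/
def urStr {τ : Type} (l : List (Br × τ)) : ℕ := (scan l).1.length

/-- Number of uncanceled "(" in a tagged bracket string. -/
def epsStr {τ : Type} (l : List (Br × τ)) : ℕ := (scan l).2.length

/-- Tag of the rightmost uncanceled ")", if any. -/
def lastCl {τ : Type} (l : List (Br × τ)) : Option τ := (scan l).1.getLast?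

/-- Tag of the leftmost uncanceled "(", if any. -/
def headOp {τ : Type} (l : List (Br × τ)) : Option τ := (scan l).2.head?

/-- The string `S_i(M)`: segments are ordered by increasing height, then by
decreasing lower endpoint; each `[h,i]` contributes "(" and each `[h,i-1]`
contributes ")".  In the block of segments of height `t` the "(" over the
`[i-t+1, i]` segments come immediately before the ")" over the `[i-t, i-1]`
segments, and blocks appear for `t = 1, 2, …`. -/
def Si (M : MS) (i : ℕ) : List (Br × Seg) :=
  (List.range i).flatMap fun t0 =>
    let t := t0 + 1
    List.replicate (M.count (i - t + 1, i)) (Br.op, ((i - t + 1 : ℕ), i)) ++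
    List.replicate (M.count (i - t, i - 1)) (Br.cl, ((i - t : ℕ), i - 1))

/-- The string `S_i^*(M)`: segments ordered by increasing height, then by
increasing lower endpoint; each `[i,j]` contributes "(" and each `[i+1,j]`
contributes ")".  In the block of height `t` the "(" below the `[i, i+t-1]`
segments come immediately before the ")" below the `[i+1, i+t]` segments. -/
def SiStar (n : ℕ) (M : MS) (i : ℕ) : List (Br × Seg) :=
  (List.range n).flatMap fun t0 =>
    let t := t0 + 1
    List.replicate (M.count (i, i + t - 1)) (Br.op, (i, i + t - 1)) ++
    List.replicate (M.count (i + 1, i + t)) (Br.cl, (i + 1, i + t))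

/-- The crystal operator `f_i` on multisegments: it changes the segment `[h,i-1]`
under the rightmost uncanceled ")" of `S_i(M)` into `[h,i]`, or adds a new
segment `[i,i]` if there is no uncanceled ")". -/
def fM (i : ℕ) (M : MS) : MS :=
  match lastCl (Si M i) with
  | some s => M.erase s + {(s.1, i)}
  | none => M + {(i, i)}

/-- The crystal operator `e_i` on multisegments: it changes the segment `[h,i]`
under the leftmost uncanceled "(" of `S_i(M)` into `[h,i-1]` (deleting it when
`h = i`), or returns `none` (i.e. `0`) if there is no uncanceled "(". -/
def eM (i : ℕ) (M : MS) : Option MS :=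
  match headOp (Si M i) with
  | some s => some (if s.1 = i then M.erase s else M.erase s + {(s.1, i - 1)})
  | none => none

/-- The operator `f_i^*`: it changes the segment `[i+1,j]` under the rightmost
uncanceled ")" of `S_i^*(M)` into `[i,j]`, or adds `[i,i]` if there is none. -/
def fMStar (n i : ℕ) (M : MS) : MS :=
  match lastCl (SiStar n M i) with
  | some s => M.erase s + {(i, s.2)}
  | none => M + {(i, i)}

/-- The operator `e_i^*`: it changes the segment `[i,j]` under the leftmost
uncanceled "(" of `S_i^*(M)` into `[i+1,j]` (deleting it when `j = i`), or
returns `none` if there is no uncanceled "(". -/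
def eMStar (n i : ℕ) (M : MS) : Option MS :=
  match headOp (SiStar n M i) with
  | some s => some (if s.2 = i then M.erase s else M.erase s + {(i + 1, s.2)})
  | none => none

/-- The number of boxes labeled `j` in `M`: each segment `[a,b]` contains one
box labeled `j` for each `a ≤ j ≤ b`. -/
def boxes (M : MS) (j : ℕ) : ℕ :=
  (M.filter (fun s => s.1 ≤ j ∧ j ≤ s.2)).card

/-- The pairing `⟨wt(M), α_i^∨⟩ = #(boxes i-1) + #(boxes i+1) - 2 #(boxes i)`. -/
def wtPair (M : MS) (i : ℕ) : ℤ :=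
  (boxes M (i - 1) : ℤ) + (boxes M (i + 1) : ℤ) - 2 * (boxes M i : ℤ)


/-- Apply the raising operators `e_k` along a list of indices. -/
def eChain : List ℕ → MS → Option MS
  | [], M => some M
  | k :: l, M => (eM k M).bind (eChain l)


namespace Stmt5Aux

lemma foldl_ops_only {τ : Type} (l : List (Br × τ)) (h : ∀ p ∈ l, p.1 = Br.op)
    (st : List τ × List τ) : (l.foldl step st).2 = st.2 ++ l.map Prod.snd := by
  induction l generalizing st with
  | nil => simp
  | cons p l ih =>
    obtain ⟨b, s⟩ := p
    have hb : b = Br.op := h _ (List.mem_cons_self)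
    subst hb
    obtain ⟨cls, ops⟩ := st
    rw [List.foldl_cons, ih (fun q hq => h q (List.mem_cons_of_mem _ hq))]
    simp [step]

lemma mem_scan_ops {τ : Type} (l : List (Br × τ)) (st : List τ × List τ) (x : τ)
    (hx : x ∈ (l.foldl step st).2) : x ∈ st.2 ∨ (Br.op, x) ∈ l := by
  induction l generalizing st with
  | nil => exact Or.inl hx
  | cons p l ih =>
    obtain ⟨b, s⟩ := p
    obtain ⟨cls, ops⟩ := st
    rw [List.foldl_cons] at hx
    cases b with
    | op =>
      rcases ih _ hx with h | h
      · simp only [step] at h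
        rcases List.mem_append.1 h with h | h
        · exact Or.inl h
        · simp only [List.mem_singleton] at h
          subst h
          exact Or.inr (List.mem_cons_self)
      · exact Or.inr (List.mem_cons_of_mem _ h)
    | cl =>
      rcases ih _ hx with h | h
      · simp only [step] at h
        split at h
        · exact Or.inl h
        · exact Or.inl (List.mem_of_mem_dropLast h)
      · exact Or.inr (List.mem_cons_of_mem _ h)

lemma scan_snd_ne_nil {τ : Type} (l₁ : List (Br × τ)) (s : τ) (l₂ : List (Br × τ))
    (h : ∀ p ∈ l₂, p.1 = Br.op) : (scan (l₁ ++ (Br.op, s) :: l₂)).2 ≠ [] := by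
  unfold scan
  rw [List.foldl_append]
  have := foldl_ops_only ((Br.op, s) :: l₂)
    (by intro p hp
        rcases List.mem_cons.1 hp with h' | h'
        · subst h'; rfl
        · exact h p h')
    (l₁.foldl step ([], []))
  rw [this]
  simp

/-- Total number of boxes, the measure that decreases under `eM`. -/
def φ (M : MS) : ℕ := (M.map fun s => s.2 + 1 - s.1).sum

lemma φ_erase {M : MS} {s : Seg} (hs : s ∈ M) :
    φ M = φ (M.erase s) + (s.2 + 1 - s.1) := by
  conv_lhs => rw [← Multiset.cons_erase hs]
  simp [φ, add_comm]

lemma φ_add_single (M : MS) (x : Seg) : φ (M + {x}) = φ M + (x.2 + 1 - x.1) := by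
  simp [φ]

lemma exists_step (n : ℕ) (M : MS) (hM : IsMS n M) (h0 : M ≠ 0) :
    ∃ k M', 1 ≤ k ∧ k ≤ n ∧ eM k M = some M' ∧ IsMS n M' ∧ φ M' < φ M := by
  have hne : M.toFinset.Nonempty := by
    rw [Multiset.toFinset_nonempty]; exact h0
  obtain ⟨s₀, hs₀, hmax₀⟩ := M.toFinset.exists_max_image (fun x => x.2 - x.1) hne
  set H := s₀.2 - s₀.1 with hH
  obtain ⟨s, hsT, hmin⟩ := (M.toFinset.filter (fun x => x.2 - x.1 = H)).exists_min_image
    (fun x => x.1) ⟨s₀, by simp [hs₀]; rfl⟩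
  rw [Finset.mem_filter, Multiset.mem_toFinset] at hsT
  obtain ⟨hsM, hsH⟩ := hsT
  obtain ⟨ha1, hab, hbn⟩ := hM s hsM
  set a := s.1 with hadef
  set b := s.2 with hbdef
  have hmax : ∀ x ∈ M, x.2 - x.1 ≤ H := fun x hx => hmax₀ x (Multiset.mem_toFinset.2 hx)
  have hminA : ∀ x ∈ M, x.2 - x.1 = H → a ≤ x.1 := fun x hx hxH =>
    hmin x (Finset.mem_filter.2 ⟨Multiset.mem_toFinset.2 hx, hxH⟩)
  have hc0 : M.count ((a - 1 : ℕ), (b - 1 : ℕ)) = 0 := by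
    by_contra hc
    have hmem : ((a - 1 : ℕ), (b - 1 : ℕ)) ∈ M := by
      rw [← Multiset.count_pos]; omega
    obtain ⟨h1, h2, h3⟩ := hM _ hmem
    simp only at h1 h2 h3
    have hh : (b - 1) - (a - 1) = H := by omega
    have := hminA _ hmem hh
    simp only at this
    omega
  set F : ℕ → List (Br × Seg) := fun t0 =>
    List.replicate (M.count (b - (t0 + 1) + 1, b)) (Br.op, ((b - (t0 + 1) + 1 : ℕ), b)) ++
    List.replicate (M.count (b - (t0 + 1), b - 1)) (Br.cl, ((b - (t0 + 1) : ℕ), (b - 1 : ℕ)))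
    with hF
  have hSi : Si M b = (List.range b).flatMap F := rfl
  have hbsplit : b = ((b - a) + 1) + (b - (b - a + 1)) := by omega
  have hrange : List.range b = (List.range (b - a) ++ [b - a]) ++
      (List.range (b - (b - a + 1))).map (fun x => ((b - a) + 1) + x) := by
    conv_lhs => rw [hbsplit]
    rw [List.range_add, List.range_succ]
  have htail : ((List.range (b - (b - a + 1))).map (fun x => ((b - a) + 1) + x)).flatMap F
      = [] := by
    rw [List.flatMap_eq_nil_iff]
    intro t0 ht0
    simp only [List.mem_map, List.mem_range] at ht0
    obtain ⟨x, hx, rfl⟩ := ht0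
    rw [hF]
    have hc1 : M.count (b - ((b - a + 1 + x) + 1) + 1, b) = 0 := by
      by_contra hc
      have hmem : ((b - ((b - a + 1 + x) + 1) + 1 : ℕ), b) ∈ M := by
        rw [← Multiset.count_pos]; omega
      have := hmax _ hmem
      obtain ⟨h1, h2, h3⟩ := hM _ hmem
      simp only at this h1 h2 h3
      omega
    have hc2 : M.count (b - ((b - a + 1 + x) + 1), b - 1) = 0 := by
      by_contra hc
      have hmem : ((b - ((b - a + 1 + x) + 1) : ℕ), (b - 1 : ℕ)) ∈ M := by
        rw [← Multiset.count_pos]; omega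
      have := hmax _ hmem
      obtain ⟨h1, h2, h3⟩ := hM _ hmem
      simp only at this h1 h2 h3
      omega
    simp [hc1, hc2]
  have e1 : b - ((b - a) + 1) + 1 = a := by omega
  have e2 : b - ((b - a) + 1) = a - 1 := by omega
  have e3 : a - 1 + 1 = a := by omega
  have hFba : F (b - a) = List.replicate (M.count (a, b)) (Br.op, ((a : ℕ), b)) := by
    rw [hF]
    simp only [e1, e2, e3, hc0, List.replicate_zero, List.append_nil]
  have hcpos : M.count ((a : ℕ), b) ≠ 0 := by
    have hm : ((a : ℕ), b) ∈ M := by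
      rw [hadef, hbdef, Prod.mk.eta]; exact hsM
    exact Nat.pos_iff_ne_zero.mp (Multiset.count_pos.2 hm)
  obtain ⟨c', hc'⟩ : ∃ c', M.count ((a : ℕ), b) = c' + 1 := by
    rcases Nat.exists_eq_succ_of_ne_zero hcpos with ⟨c', hc'⟩
    exact ⟨c', hc'⟩
  have hdecomp : Si M b = (List.range (b - a)).flatMap F ++
      ((Br.op, ((a : ℕ), b)) :: List.replicate c' (Br.op, ((a : ℕ), b))) := by
    rw [hSi, hrange, List.flatMap_append, List.flatMap_append, htail, List.append_nil]
    congr 1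
    rw [List.flatMap_cons, List.flatMap_nil, List.append_nil, hFba, hc',
      List.replicate_succ]
  have hscan : (scan (Si M b)).2 ≠ [] := by
    rw [hdecomp]
    exact scan_snd_ne_nil _ _ _ (fun p hp => by
      rw [List.eq_of_mem_replicate hp])
  obtain ⟨s', l', hl'⟩ : ∃ s' l', (scan (Si M b)).2 = s' :: l' := by
    cases h : (scan (Si M b)).2 with
    | nil => exact absurd h hscan
    | cons x xs => exact ⟨x, xs, rfl⟩
  have hhead : headOp (Si M b) = some s' := by
    unfold headOp
    rw [hl']
    rfl
  have hs'mem : s' ∈ (scan (Si M b)).2 := by rw [hl']; exact List.mem_cons_self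
  have hs'op : (Br.op, s') ∈ Si M b := by
    rcases mem_scan_ops _ _ _ hs'mem with h | h
    · simp at h
    · exact h
  have hs'M : s' ∈ M ∧ s'.2 = b := by
    rw [hSi, List.mem_flatMap] at hs'op
    obtain ⟨t0, ht0, hmem⟩ := hs'op
    rw [hF] at hmem
    rcases List.mem_append.1 hmem with h | h
    · have heq := List.eq_of_mem_replicate h
      have hcnt : M.count (b - (t0 + 1) + 1, b) ≠ 0 := by
        intro hz
        rw [hz] at h
        simp at h
      have hs'eq : s' = ((b - (t0 + 1) + 1 : ℕ), b) := by
        simpa [Prod.ext_iff] using heq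
      constructor
      · rw [hs'eq, ← Multiset.count_pos]
        omega
      · rw [hs'eq]
    · have heq := List.eq_of_mem_replicate h
      simp at heq
  obtain ⟨hs'M, hs'b⟩ := hs'M
  obtain ⟨h1', h2', h3'⟩ := hM s' hs'M
  have heM : eM b M = some (if s'.1 = b then M.erase s'
      else M.erase s' + {(s'.1, b - 1)}) := by
    unfold eM
    rw [hhead]
  have hkb : 1 ≤ b := by omega
  by_cases hcase : s'.1 = b
  · refine ⟨b, M.erase s', hkb, hbn, ?_, ?_, ?_⟩
    · rw [heM, if_pos hcase]
    · intro x hx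
      exact hM x (Multiset.mem_of_mem_erase hx)
    · have := φ_erase hs'M
      omega
  · refine ⟨b, M.erase s' + {(s'.1, b - 1)}, hkb, hbn, ?_, ?_, ?_⟩
    · rw [heM, if_neg hcase]
    · intro x hx
      rcases Multiset.mem_add.1 hx with h | h
      · exact hM x (Multiset.mem_of_mem_erase h)
      · rw [Multiset.mem_singleton] at h
        subst h
        simp only
        omega
    · have h1 := φ_erase hs'M
      have h2 := φ_add_single (M.erase s') (s'.1, b - 1)
      simp only at h2
      omega

lemma eChain_exists (n : ℕ) : ∀ m : ℕ, ∀ M : MS, φ M = m → IsMS n M →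
    ∃ l : List ℕ, (∀ k ∈ l, 1 ≤ k ∧ k ≤ n) ∧ eChain l M = some (0 : MS) := by
  intro m
  induction m using Nat.strong_induction_on with
  | _ m ih =>
    intro M hm hM
    by_cases h0 : M = 0
    · exact ⟨[], by simp, by simp [h0, eChain]⟩
    · obtain ⟨k, M', hk1, hkn, he, hM', hlt⟩ := exists_step n M hM h0
      obtain ⟨l, hl, hch⟩ := ih (φ M') (hm ▸ hlt) M' rfl hM'
      refine ⟨k :: l, ?_, ?_⟩
      · intro j hj
        rcases List.mem_cons.1 hj with h | h
        · subst h; exact ⟨hk1, hkn⟩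
        · exact hl j h
      · simp [eChain, he, hch]

end Stmt5Aux

theorem stmt5 (n : ℕ) :
    (∀ M : MS, IsMS n M → M ≠ 0 → ∃ k, 1 ≤ k ∧ k ≤ n ∧ eM k M ≠ none) ∧
    (∀ M : MS, IsMS n M →
      ∃ l : List ℕ, (∀ k ∈ l, 1 ≤ k ∧ k ≤ n) ∧ eChain l M = some (0 : MS)) := by
  constructor
  · intro M hM h0
    obtain ⟨k, M', hk1, hkn, he, _, _⟩ := Stmt5Aux.exists_step n M hM h0
    exact ⟨k, hk1, hkn, by rw [he]; simp⟩
  · intro M hM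
    exact Stmt5Aux.eChain_exists n (Stmt5Aux.φ M) M rfl hM
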